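/- Let E_{r,n}(t) be defined by E_{r,0}(t) = r/(t−1) and E_{r,n}(t) = −(t+r−1)·d/dt E_{r,n−1}(t) for n ≥ 1. Then for all n ≥ 1, E_{r,n}(t) = (−1)^{n−1} · r · Σ_{j=1}^{n} j! · S(n,j) · (t+r−1)^j / (1−t)^{j+1}, where S(n,j) are the Stirling numbers of the second kind. -/

import Mathlib

open Finset

/-- The Stirling numbers of the second kind, via `S(n+1,j) = j·S(n,j) + S(n,j−1)`. -/
def stirling2 : ℕ → ℕ → ℕ
  | 0, 0 => 1
  | 0, _ + 1 => 0
  | _ + 1, 0 => 0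
  | n + 1, j + 1 => (j + 1) * stirling2 n (j + 1) + stirling2 n j

lemma stirling2_eq_zero_of_lt : ∀ {n j : ℕ}, n < j → stirling2 n j = 0 := by
  intro n
  induction n with
  | zero =>
    intro j hj
    cases j with
    | zero => omega
    | succ k => rfl
  | succ m ih =>
    intro j hj
    cases j with
    | zero => omega
    | succ k =>
      show (k + 1) * stirling2 m (k + 1) + stirling2 m k = 0
      rw [ih (by omega), ih (by omega)]
      simp

/-- key algebraic identity -/
lemma key_sum (r n : ℕ) (hn : 1 ≤ n) (t : ℝ) (hv : (1 : ℝ) - t ≠ 0) :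
    (t + r - 1) * ∑ j ∈ Icc 1 n,
        (j.factorial : ℝ) * (stirling2 n j : ℝ) *
          ((j : ℝ) * (t + r - 1) ^ (j - 1) * (1 - t) + ((j : ℝ) + 1) * (t + r - 1) ^ j) /
            (1 - t) ^ (j + 2)
    = ∑ j ∈ Icc 1 (n + 1),
        (j.factorial : ℝ) * (stirling2 (n + 1) j : ℝ) * (t + r - 1) ^ j / (1 - t) ^ (j + 1) := by
  set u : ℝ := t + r - 1 with hu
  rw [Finset.mul_sum]
  have hsplit : ∀ j ∈ Icc 1 n,
      u * ((j.factorial : ℝ) * (stirling2 n j : ℝ) *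
          ((j : ℝ) * u ^ (j - 1) * (1 - t) + ((j : ℝ) + 1) * u ^ j) / (1 - t) ^ (j + 2))
      = (j : ℝ) * ((j.factorial : ℝ) * (stirling2 n j : ℝ)) * u ^ j / (1 - t) ^ (j + 1)
        + ((j : ℝ) + 1) * ((j.factorial : ℝ) * (stirling2 n j : ℝ)) * u ^ (j + 1) / (1 - t) ^ (j + 2) := by
    intro j hj
    have hj1 : 1 ≤ j := (Finset.mem_Icc.mp hj).1
    obtain ⟨k, rfl⟩ : ∃ k, j = k + 1 := ⟨j - 1, by omega⟩
    simp only [Nat.add_sub_cancel]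
    field_simp
    ring
  rw [Finset.sum_congr rfl hsplit, Finset.sum_add_distrib]
  -- second sum reindex
  have h2 : (∑ j ∈ Icc 1 n,
      ((j : ℝ) + 1) * ((j.factorial : ℝ) * (stirling2 n j : ℝ)) * u ^ (j + 1) / (1 - t) ^ (j + 2))
      = ∑ j ∈ Icc 2 (n + 1),
        (j : ℝ) * (((j - 1).factorial : ℝ) * (stirling2 n (j - 1) : ℝ)) * u ^ j / (1 - t) ^ (j + 1) := by
    rw [show (2 : ℕ) = 1 + 1 from rfl, ← Finset.map_add_right_Icc 1 n 1, Finset.sum_map]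
    apply Finset.sum_congr rfl
    intro j hj
    simp only [addRightEmbedding_apply, Nat.add_sub_cancel]
    push_cast
    ring
  rw [h2]
  -- extend second sum down to 1 (term at 1 is zero)
  have h3 : (∑ j ∈ Icc 2 (n + 1),
      (j : ℝ) * (((j - 1).factorial : ℝ) * (stirling2 n (j - 1) : ℝ)) * u ^ j / (1 - t) ^ (j + 1))
      = ∑ j ∈ Icc 1 (n + 1),
        (j : ℝ) * (((j - 1).factorial : ℝ) * (stirling2 n (j - 1) : ℝ)) * u ^ j / (1 - t) ^ (j + 1) := by
    apply Finset.sum_subset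
    · intro x hx
      simp only [Finset.mem_Icc] at hx ⊢
      omega
    · intro x hx hx2
      have hx1 : x = 1 := by
        simp only [Finset.mem_Icc] at hx hx2
        omega
      subst hx1
      have hz : stirling2 n 0 = 0 := by
        obtain ⟨m, rfl⟩ : ∃ m, n = m + 1 := ⟨n - 1, by omega⟩
        rfl
      simp [hz]
  rw [h3]
  -- extend first sum up to n+1 (term at n+1 is zero)
  have h4 : (∑ j ∈ Icc 1 n,
      (j : ℝ) * ((j.factorial : ℝ) * (stirling2 n j : ℝ)) * u ^ j / (1 - t) ^ (j + 1))
      = ∑ j ∈ Icc 1 (n + 1),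
        (j : ℝ) * ((j.factorial : ℝ) * (stirling2 n j : ℝ)) * u ^ j / (1 - t) ^ (j + 1) := by
    symm
    rw [Finset.sum_Icc_succ_top (by omega : 1 ≤ n + 1)]
    rw [stirling2_eq_zero_of_lt (by omega : n < n + 1)]
    simp
  rw [h4, ← Finset.sum_add_distrib]
  apply Finset.sum_congr rfl
  intro j hj
  obtain ⟨k, rfl⟩ : ∃ k, j = k + 1 := ⟨j - 1, by simp only [Finset.mem_Icc] at hj; omega⟩
  simp only [Nat.add_sub_cancel]
  have hS : (stirling2 (n + 1) (k + 1) : ℝ)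
      = ((k : ℝ) + 1) * (stirling2 n (k + 1) : ℝ) + (stirling2 n k : ℝ) := by
    show ((((k + 1) * stirling2 n (k + 1) + stirling2 n k : ℕ) : ℝ)) = _
    push_cast
    ring
  rw [hS, Nat.factorial_succ]
  push_cast
  ring

/-- Let `E_{r,n}` be defined by `E_{r,0}(t) = r/(t−1)` and
`E_{r,n}(t) = −(t+r−1)·(d/dt) E_{r,n−1}(t)` for `n ≥ 1`.  Then for all `n ≥ 1`,
`E_{r,n}(t) = (−1)^{n−1}·r·Σ_{j=1}^{n} j!·S(n,j)·(t+r−1)^j/(1−t)^{j+1}`. -/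
theorem E_closed_form (r : ℕ) (hr : 1 ≤ r) (E : ℕ → ℝ → ℝ)
    (hE0 : ∀ t : ℝ, E 0 t = r / (t - 1))
    (hErec : ∀ n : ℕ, 1 ≤ n → ∀ t : ℝ, E n t = -(t + r - 1) * deriv (E (n - 1)) t)
    (n : ℕ) (hn : 1 ≤ n) (t : ℝ) (ht : t ≠ 1) :
    E n t =
      (-1 : ℝ) ^ (n - 1) * r *
        ∑ j ∈ Finset.Icc 1 n,
          (j.factorial : ℝ) * (stirling2 n j : ℝ) * (t + r - 1) ^ j / (1 - t) ^ (j + 1) := by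
  induction n, hn using Nat.le_induction generalizing t with
  | base =>
    have hv : (1 : ℝ) - t ≠ 0 := sub_ne_zero.mpr (Ne.symm ht)
    have hv' : t - 1 ≠ 0 := sub_ne_zero.mpr ht
    have h0 : E 0 = fun s : ℝ => (r : ℝ) / (s - 1) := funext hE0
    have hd : HasDerivAt (fun s : ℝ => (r : ℝ) / (s - 1))
        ((0 * (t - 1) - (r : ℝ) * 1) / (t - 1) ^ 2) t :=
      (hasDerivAt_const t (r : ℝ)).div ((hasDerivAt_id t).sub_const 1) hv'
    rw [hErec 1 le_rfl t]
    norm_num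
    rw [h0, hd.deriv]
    have hS11 : stirling2 1 1 = 1 := rfl
    rw [hS11]
    push_cast
    field_simp
    ring
  | succ n hn1 ih =>
    have hv : (1 : ℝ) - t ≠ 0 := sub_ne_zero.mpr (Ne.symm ht)
    -- derivative of the closed form at t
    have h1 : HasDerivAt (fun s : ℝ => s + (r : ℝ) - 1) 1 t := by
      simpa [add_sub_assoc] using (hasDerivAt_id t).add_const ((r : ℝ) - 1)
    have h2 : HasDerivAt (fun s : ℝ => 1 - s) (-1) t := by
      simpa using (hasDerivAt_id t).const_sub (1 : ℝ)
    have hterm : ∀ j ∈ Icc 1 n, HasDerivAt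
        (fun s : ℝ => (j.factorial : ℝ) * (stirling2 n j : ℝ) * (s + r - 1) ^ j / (1 - s) ^ (j + 1))
        ((j.factorial : ℝ) * (stirling2 n j : ℝ) *
          ((j : ℝ) * (t + r - 1) ^ (j - 1) * (1 - t) + ((j : ℝ) + 1) * (t + r - 1) ^ j) /
            (1 - t) ^ (j + 2)) t := by
      intro j hj
      obtain ⟨k, rfl⟩ : ∃ k, j = k + 1 := ⟨j - 1, by simp only [Finset.mem_Icc] at hj; omega⟩
      have hD := (HasDerivAt.const_mul ((((k+1).factorial : ℝ)) * (stirling2 n (k+1) : ℝ))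
          (h1.pow (k + 1))).div (h2.pow (k + 2)) (pow_ne_zero _ hv)
      convert hD using 1
      · rfl
      · rfl
      · funext s
        rfl
      simp only [Pi.pow_apply]
      push_cast
      field_simp
      ring
    have hsum := HasDerivAt.sum hterm
    have hF := HasDerivAt.const_mul ((-1 : ℝ) ^ (n - 1) * (r : ℝ)) hsum
    -- E n agrees with closed form near t
    have hev : E n =ᶠ[nhds t] (fun s : ℝ =>
        (-1 : ℝ) ^ (n - 1) * r * ∑ j ∈ Icc 1 n,
          (j.factorial : ℝ) * (stirling2 n j : ℝ) * (s + r - 1) ^ j / (1 - s) ^ (j + 1)) := by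
      filter_upwards [eventually_ne_nhds ht] with s hs
      exact ih s hs
    have hderiv : deriv (E n) t = (-1 : ℝ) ^ (n - 1) * (r : ℝ) * ∑ j ∈ Icc 1 n,
        (j.factorial : ℝ) * (stirling2 n j : ℝ) *
          ((j : ℝ) * (t + r - 1) ^ (j - 1) * (1 - t) + ((j : ℝ) + 1) * (t + r - 1) ^ j) /
            (1 - t) ^ (j + 2) := by
      rw [hev.deriv_eq]
      simpa only [Finset.sum_apply] using hF.deriv
    rw [hErec (n + 1) (by omega) t]
    simp only [Nat.add_sub_cancel]
    rw [hderiv]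
    have hkey := key_sum r n hn1 t hv
    have hpow : (-1 : ℝ) ^ n = (-1 : ℝ) ^ (n - 1) * (-1) := by
      conv_lhs => rw [show n = n - 1 + 1 by omega]
      rw [pow_succ]
    rw [hpow]
    calc -(t + ↑r - 1) * ((-1 : ℝ) ^ (n - 1) * ↑r * ∑ j ∈ Icc 1 n,
          (j.factorial : ℝ) * (stirling2 n j : ℝ) *
            ((j : ℝ) * (t + ↑r - 1) ^ (j - 1) * (1 - t) + ((j : ℝ) + 1) * (t + ↑r - 1) ^ j) /
              (1 - t) ^ (j + 2))
        = (-1 : ℝ) ^ (n - 1) * ↑r * (-1) * ((t + ↑r - 1) * ∑ j ∈ Icc 1 n,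
          (j.factorial : ℝ) * (stirling2 n j : ℝ) *
            ((j : ℝ) * (t + ↑r - 1) ^ (j - 1) * (1 - t) + ((j : ℝ) + 1) * (t + ↑r - 1) ^ j) /
              (1 - t) ^ (j + 2)) := by ring
      _ = (-1 : ℝ) ^ (n - 1) * ↑r * (-1) * ∑ j ∈ Icc 1 (n + 1),
            (j.factorial : ℝ) * (stirling2 (n + 1) j : ℝ) * (t + ↑r - 1) ^ j / (1 - t) ^ (j + 1) := by
          rw [hkey]
      _ = (-1 : ℝ) ^ (n - 1) * (-1) * ↑r * ∑ j ∈ Icc 1 (n + 1),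
            (j.factorial : ℝ) * (stirling2 (n + 1) j : ℝ) * (t + ↑r - 1) ^ j / (1 - t) ^ (j + 1) := by
          ring
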